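/- Let H = 2P_1+2P_2 (two isolated vertices together with two disjoint edges). For every black-and-white labelling ℓ of H, the bipartite complement of H with respect to ℓ contains an induced subgraph isomorphic to the cycle C_4; in particular, this bipartite complement does not belong to the class S. -/
import Mathlib


open SimpleGraph

/-- `B` is the black colour class of a black-and-white labelling of `H`:
every edge of `H` joins a vertex of `B` to a vertex outside `B`
(equivalently, `B` and its complement `Bᶜ` are both independent sets,
i.e. `(B, Bᶜ)` is a bipartition of `H` into two possibly empty independent sets). -/
def IsBWLabelling {V : Type*} (H : SimpleGraph V) (B : Set V) : Prop :=
  ∀ ⦃u v : V⦄, H.Adj u v → (u ∈ B ↔ v ∉ B)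

/-- `H` with black class `BH` is a labelled induced subgraph of `G` with black class `BG`:
there is an injective map preserving both adjacency and non-adjacency which maps
black vertices to black vertices and white vertices to white vertices. -/
def LabelledIndSubgraph {VH VG : Type*} (H : SimpleGraph VH) (BH : Set VH)
    (G : SimpleGraph VG) (BG : Set VG) : Prop :=
  ∃ f : VH → VG, Function.Injective f ∧
    (∀ u v : VH, H.Adj u v ↔ G.Adj (f u) (f v)) ∧
    (∀ u : VH, u ∈ BH ↔ f u ∈ BG)

/-- `G` is strongly `H^ℓ`-free, where `BH` is the black class of the labelling `ℓ`:
there is no bipartition `(BG, BGᶜ)` of `G` such that `H^ℓ` is a labelled induced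
subgraph of `(BG, BGᶜ, E_G)`. -/
def StronglyFree {VG VH : Type*} (G : SimpleGraph VG) (H : SimpleGraph VH)
    (BH : Set VH) : Prop :=
  ¬ ∃ BG : Set VG, IsBWLabelling G BG ∧ LabelledIndSubgraph H BH G BG

/-- `G` is weakly `H^ℓ`-free, where `BH` is the black class of the labelling `ℓ`:
it is not the case that `H^ℓ` is a labelled induced subgraph of `(BG, BGᶜ, E_G)`
for every bipartition `(BG, BGᶜ)` of `G`. -/
def WeaklyFree {VG VH : Type*} (G : SimpleGraph VG) (H : SimpleGraph VH)
    (BH : Set VH) : Prop :=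
  ¬ ∀ BG : Set VG, IsBWLabelling G BG → LabelledIndSubgraph H BH G BG

/-- `G` is `H`-free: `G` contains no induced subgraph isomorphic to `H`. -/
def HFree {VG VH : Type*} (G : SimpleGraph VG) (H : SimpleGraph VH) : Prop :=
  ¬ ∃ f : VH → VG, Function.Injective f ∧ ∀ u v : VH, H.Adj u v ↔ G.Adj (f u) (f v)

/-- The bipartite complement of `H` with respect to the black-and-white labelling
with black class `B`: a black vertex and a white vertex are adjacent if and only if
they are non-adjacent in `H`, and no two vertices of the same colour are adjacent. -/
def bipComplement {V : Type*} (H : SimpleGraph V) (B : Set V) : SimpleGraph V :=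
  SimpleGraph.fromRel (fun u v => u ∈ B ∧ v ∉ B ∧ ¬ H.Adj u v)

/-- The subdivided claw `S_{h,i,j}` (for `1 ≤ h ≤ i ≤ j`): the tree with one centre
vertex `0` of degree `3` and three paths attached to it, with leaves at distance
`h`, `i` and `j` from the centre. The vertices of the three paths are
`1, …, h`, `h+1, …, h+i` and `h+i+1, …, h+i+j`, respectively. -/
def subdividedClaw (h i j : ℕ) : SimpleGraph (Fin (h + i + j + 1)) :=
  SimpleGraph.fromRel (fun a b =>
    (a.val = 0 ∧ (b.val = 1 ∨ b.val = h + 1 ∨ b.val = h + i + 1)) ∨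
    (1 ≤ a.val ∧ b.val = a.val + 1 ∧
      (b.val ≤ h ∨ (h + 1 ≤ a.val ∧ b.val ≤ h + i) ∨
        (h + i + 1 ≤ a.val ∧ b.val ≤ h + i + j))))

/-- `H` belongs to the class `S`: every connected component of `H` is isomorphic
to a path `P_r` for some `r ≥ 1` or to a subdivided claw `S_{h,i,j}` for some
`1 ≤ h ≤ i ≤ j`. -/
def InClassS {V : Type*} (H : SimpleGraph V) : Prop :=
  ∀ c : H.ConnectedComponent,
    (∃ r : ℕ, 1 ≤ r ∧ Nonempty ((H.induce c.supp) ≃g SimpleGraph.pathGraph r)) ∨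
    (∃ h i j : ℕ, 1 ≤ h ∧ h ≤ i ∧ i ≤ j ∧
      Nonempty ((H.induce c.supp) ≃g subdividedClaw h i j))

/-- The graph `2P_1 + 2P_2`: vertices `0, 1` isolated, edges `23` and `45`. -/
def g2P1'2P2 : SimpleGraph (Fin 6) := SimpleGraph.fromEdgeSet {s(2, 3), s(4, 5)}


lemma no_c4_path (r : ℕ) (e : cycleGraph 4 ↪g pathGraph r) : False := by
  have a01 := (e.map_rel_iff (a := 0) (b := 1)).mpr (by decide)
  have a12 := (e.map_rel_iff (a := 1) (b := 2)).mpr (by decide)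
  have a23 := (e.map_rel_iff (a := 2) (b := 3)).mpr (by decide)
  have a30 := (e.map_rel_iff (a := 3) (b := 0)).mpr (by decide)
  have d13 : e 1 ≠ e 3 := fun hq => by exact absurd (e.injective hq) (by decide)
  have d02 : e 0 ≠ e 2 := fun hq => by exact absurd (e.injective hq) (by decide)
  rw [pathGraph_adj] at a01 a12 a23 a30
  rw [Ne, Fin.ext_iff] at d13 d02
  omega

set_option maxHeartbeats 2000000 in
lemma no_c4_claw (h i j : ℕ) (e : cycleGraph 4 ↪g subdividedClaw h i j) : False := by
  have a01 := (e.map_rel_iff (a := 0) (b := 1)).mpr (by decide)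
  have a12 := (e.map_rel_iff (a := 1) (b := 2)).mpr (by decide)
  have a23 := (e.map_rel_iff (a := 2) (b := 3)).mpr (by decide)
  have a30 := (e.map_rel_iff (a := 3) (b := 0)).mpr (by decide)
  have d13 : e 1 ≠ e 3 := fun hq => by exact absurd (e.injective hq) (by decide)
  have d02 : e 0 ≠ e 2 := fun hq => by exact absurd (e.injective hq) (by decide)
  simp only [subdividedClaw, fromRel_adj, Ne, Fin.ext_iff] at a01 a12 a23 a30
  rw [Ne, Fin.ext_iff] at d13 d02
  rcases a01 with ⟨-, (x1|x1)|(x1|x1)⟩ <;>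
  rcases a12 with ⟨-, (x2|x2)|(x2|x2)⟩ <;>
  rcases a23 with ⟨-, (x3|x3)|(x3|x3)⟩ <;>
  rcases a30 with ⟨-, (x4|x4)|(x4|x4)⟩ <;>
  omega

lemma c4_not_inS {V : Type*} (G : SimpleGraph V) (e : cycleGraph 4 ↪g G) :
    ¬ InClassS G := by
  intro hS
  set c := G.connectedComponentMk (e 0) with hc
  have hmem : ∀ k : Fin 4, e k ∈ c.supp := fun k => by
    have hr : (cycleGraph 4).Reachable k 0 := (cycleGraph_connected (n := 3)).preconnected k 0
    exact (ConnectedComponent.mem_supp_iff _ _).mpr (ConnectedComponent.sound (hr.map e.toHom))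
  let e' : cycleGraph 4 ↪g G.induce c.supp :=
    { toFun := fun k => ⟨e k, hmem k⟩
      inj' := fun a b hab => e.injective (congrArg Subtype.val hab)
      map_rel_iff' := fun {a b} => e.map_rel_iff }
  rcases hS c with ⟨r, -, ⟨φ⟩⟩ | ⟨h, i, j, -, -, -, ⟨φ⟩⟩
  · exact no_c4_path r (φ.toEmbedding.comp e')
  · exact no_c4_claw h i j (φ.toEmbedding.comp e')

lemma g_adj_iff (u v : Fin 6) : g2P1'2P2.Adj u v ↔
    ((u = 2 ∧ v = 3) ∨ (u = 3 ∧ v = 2) ∨ (u = 4 ∧ v = 5) ∨ (u = 5 ∧ v = 4)) := by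
  simp only [g2P1'2P2, fromEdgeSet_adj, Set.mem_insert_iff, Set.mem_singleton_iff,
    Sym2.eq, Sym2.rel_iff', Prod.mk.injEq, Prod.swap_prod_mk]
  constructor
  · rintro ⟨(⟨h1,h2⟩|⟨h1,h2⟩)|(⟨h1,h2⟩|⟨h1,h2⟩), -⟩ <;> subst h1 <;> subst h2 <;> tauto
  · rintro (⟨h1,h2⟩|⟨h1,h2⟩|⟨h1,h2⟩|⟨h1,h2⟩) <;> subst h1 <;> subst h2 <;>
      refine ⟨by tauto, by decide⟩

lemma bip_adj (B : Set (Fin 6)) {u v : Fin 6} (hu : u ∈ B) (hv : v ∉ B)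
    (hn : ¬ g2P1'2P2.Adj u v) : (bipComplement g2P1'2P2 B).Adj u v := by
  have : u ≠ v := fun hq => hv (hq ▸ hu)
  exact (fromRel_adj _ u v).mpr ⟨this, Or.inl ⟨hu, hv, hn⟩⟩

lemma bip_nonadj (B : Set (Fin 6)) {u v : Fin 6} (huv : (u ∈ B ↔ v ∈ B)) :
    ¬ (bipComplement g2P1'2P2 B).Adj u v := by
  rintro hadj
  rcases (fromRel_adj _ u v).mp hadj with ⟨-, ⟨h1,h2,-⟩|⟨h1,h2,-⟩⟩
  · exact h2 (huv.mp h1)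
  · exact h2 (huv.mpr h1)

/-- Build a C4 embedding from four vertices alternating black/white. -/
def buildC4 (B : Set (Fin 6)) (x0 x1 x2 x3 : Fin 6)
    (hb0 : x0 ∈ B) (hw1 : x1 ∉ B) (hb2 : x2 ∈ B) (hw3 : x3 ∉ B)
    (d02 : x0 ≠ x2) (d13 : x1 ≠ x3)
    (n01 : ¬ g2P1'2P2.Adj x0 x1) (n21 : ¬ g2P1'2P2.Adj x2 x1)
    (n23 : ¬ g2P1'2P2.Adj x2 x3) (n03 : ¬ g2P1'2P2.Adj x0 x3) :
    cycleGraph 4 ↪g bipComplement g2P1'2P2 B := by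
  have a01 := bip_adj B hb0 hw1 n01
  have a12 := (bip_adj B hb2 hw1 n21).symm
  have a23 := bip_adj B hb2 hw3 n23
  have a30 := (bip_adj B hb0 hw3 n03).symm
  have nbb := bip_nonadj B (Iff.intro (fun _ => hb2) (fun _ => hb0))
  have nww := bip_nonadj B (u := x1) (v := x3)
    (Iff.intro (fun hq => absurd hq hw1) (fun hq => absurd hq hw3))
  have dist : ∀ {u v : Fin 6}, u ∈ B → v ∉ B → u ≠ v := fun hu hv hq => hv (hq ▸ hu)
  refine ⟨⟨![x0, x1, x2, x3], ?_⟩, ?_⟩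
  · intro a b
    fin_cases a <;> fin_cases b <;> intro hab <;>
      first
        | rfl
        | exact absurd hab (dist hb0 hw1)
        | exact absurd hab (dist hb0 hw3)
        | exact absurd hab (dist hb2 hw1)
        | exact absurd hab (dist hb2 hw3)
        | exact absurd hab d02
        | exact absurd hab d13
        | exact absurd hab.symm (dist hb0 hw1)
        | exact absurd hab.symm (dist hb0 hw3)
        | exact absurd hab.symm (dist hb2 hw1)
        | exact absurd hab.symm (dist hb2 hw3)
        | exact absurd hab.symm d02
        | exact absurd hab.symm d13
  · have nloop : ∀ v : Fin 6, ¬ (bipComplement g2P1'2P2 B).Adj v v := fun v hq =>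
      ((fromRel_adj _ v v).mp hq).1 rfl
    intro a b
    fin_cases a <;> fin_cases b <;> constructor <;> intro hq <;>
      first
        | decide
        | exact absurd hq (by decide)
        | exact absurd hq (nloop _)
        | exact absurd hq nbb
        | exact absurd hq.symm nbb
        | exact absurd hq nww
        | exact absurd hq.symm nww
        | exact a01 | exact a12 | exact a23 | exact a30
        | exact a01.symm | exact a12.symm | exact a23.symm | exact a30.symm

/-- For every black-and-white labelling of `2P_1 + 2P_2`, the bipartite complement
of `2P_1 + 2P_2` with respect to it contains an induced subgraph isomorphic to the
cycle `C_4`; in particular, this bipartite complement does not belong to the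
class `S`. -/
theorem stmt_10 (B : Set (Fin 6)) (hB : IsBWLabelling g2P1'2P2 B) :
    Nonempty (SimpleGraph.cycleGraph 4 ↪g bipComplement g2P1'2P2 B) ∧
    ¬ InClassS (bipComplement g2P1'2P2 B) := by
  have h23 := hB ((g_adj_iff 2 3).mpr (Or.inl ⟨rfl, rfl⟩))
  have h45 := hB ((g_adj_iff 4 5).mpr (Or.inr (Or.inr (Or.inl ⟨rfl, rfl⟩))))
  have hemb : Nonempty (SimpleGraph.cycleGraph 4 ↪g bipComplement g2P1'2P2 B) := by
    by_cases h0 : (0 : Fin 6) ∈ B <;> by_cases h1 : (1 : Fin 6) ∈ B <;>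
      by_cases h2 : (2 : Fin 6) ∈ B <;> by_cases h4 : (4 : Fin 6) ∈ B
    · exact ⟨buildC4 B 0 3 1 5 (h0) (h23.mp h2) (h1) (h45.mp h4) (by decide) (by decide) (by rw [g_adj_iff]; decide) (by rw [g_adj_iff]; decide) (by rw [g_adj_iff]; decide) (by rw [g_adj_iff]; decide)⟩
    · exact ⟨buildC4 B 0 3 1 4 (h0) (h23.mp h2) (h1) (h4) (by decide) (by decide) (by rw [g_adj_iff]; decide) (by rw [g_adj_iff]; decide) (by rw [g_adj_iff]; decide) (by rw [g_adj_iff]; decide)⟩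
    · exact ⟨buildC4 B 0 2 1 5 (h0) (h2) (h1) (h45.mp h4) (by decide) (by decide) (by rw [g_adj_iff]; decide) (by rw [g_adj_iff]; decide) (by rw [g_adj_iff]; decide) (by rw [g_adj_iff]; decide)⟩
    · exact ⟨buildC4 B 0 2 1 4 (h0) (h2) (h1) (h4) (by decide) (by decide) (by rw [g_adj_iff]; decide) (by rw [g_adj_iff]; decide) (by rw [g_adj_iff]; decide) (by rw [g_adj_iff]; decide)⟩
    · exact ⟨buildC4 B 0 1 2 5 (h0) (h1) (h2) (h45.mp h4) (by decide) (by decide) (by rw [g_adj_iff]; decide) (by rw [g_adj_iff]; decide) (by rw [g_adj_iff]; decide) (by rw [g_adj_iff]; decide)⟩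
    · exact ⟨buildC4 B 0 1 2 4 (h0) (h1) (h2) (h4) (by decide) (by decide) (by rw [g_adj_iff]; decide) (by rw [g_adj_iff]; decide) (by rw [g_adj_iff]; decide) (by rw [g_adj_iff]; decide)⟩
    · exact ⟨buildC4 B 0 1 3 5 (h0) (h1) (not_not.mp (fun q => h2 (h23.mpr q))) (h45.mp h4) (by decide) (by decide) (by rw [g_adj_iff]; decide) (by rw [g_adj_iff]; decide) (by rw [g_adj_iff]; decide) (by rw [g_adj_iff]; decide)⟩
    · exact ⟨buildC4 B 0 1 3 4 (h0) (h1) (not_not.mp (fun q => h2 (h23.mpr q))) (h4) (by decide) (by decide) (by rw [g_adj_iff]; decide) (by rw [g_adj_iff]; decide) (by rw [g_adj_iff]; decide) (by rw [g_adj_iff]; decide)⟩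
    · exact ⟨buildC4 B 1 0 2 5 (h1) (h0) (h2) (h45.mp h4) (by decide) (by decide) (by rw [g_adj_iff]; decide) (by rw [g_adj_iff]; decide) (by rw [g_adj_iff]; decide) (by rw [g_adj_iff]; decide)⟩
    · exact ⟨buildC4 B 1 0 2 4 (h1) (h0) (h2) (h4) (by decide) (by decide) (by rw [g_adj_iff]; decide) (by rw [g_adj_iff]; decide) (by rw [g_adj_iff]; decide) (by rw [g_adj_iff]; decide)⟩
    · exact ⟨buildC4 B 1 0 3 5 (h1) (h0) (not_not.mp (fun q => h2 (h23.mpr q))) (h45.mp h4) (by decide) (by decide) (by rw [g_adj_iff]; decide) (by rw [g_adj_iff]; decide) (by rw [g_adj_iff]; decide) (by rw [g_adj_iff]; decide)⟩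
    · exact ⟨buildC4 B 1 0 3 4 (h1) (h0) (not_not.mp (fun q => h2 (h23.mpr q))) (h4) (by decide) (by decide) (by rw [g_adj_iff]; decide) (by rw [g_adj_iff]; decide) (by rw [g_adj_iff]; decide) (by rw [g_adj_iff]; decide)⟩
    · exact ⟨buildC4 B 2 0 4 1 (h2) (h0) (h4) (h1) (by decide) (by decide) (by rw [g_adj_iff]; decide) (by rw [g_adj_iff]; decide) (by rw [g_adj_iff]; decide) (by rw [g_adj_iff]; decide)⟩
    · exact ⟨buildC4 B 2 0 5 1 (h2) (h0) (not_not.mp (fun q => h4 (h45.mpr q))) (h1) (by decide) (by decide) (by rw [g_adj_iff]; decide) (by rw [g_adj_iff]; decide) (by rw [g_adj_iff]; decide) (by rw [g_adj_iff]; decide)⟩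
    · exact ⟨buildC4 B 3 0 4 1 (not_not.mp (fun q => h2 (h23.mpr q))) (h0) (h4) (h1) (by decide) (by decide) (by rw [g_adj_iff]; decide) (by rw [g_adj_iff]; decide) (by rw [g_adj_iff]; decide) (by rw [g_adj_iff]; decide)⟩
    · exact ⟨buildC4 B 3 0 5 1 (not_not.mp (fun q => h2 (h23.mpr q))) (h0) (not_not.mp (fun q => h4 (h45.mpr q))) (h1) (by decide) (by decide) (by rw [g_adj_iff]; decide) (by rw [g_adj_iff]; decide) (by rw [g_adj_iff]; decide) (by rw [g_adj_iff]; decide)⟩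
  exact ⟨hemb, fun hS => hemb.elim fun e => c4_not_inS _ e hS⟩
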